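/- Let (R, m, k) be a Noetherian local domain and M a finitely generated torsion-free R-module with β_n^R(M) = 1 for some n ≥ 0, where pd_R(M) = ∞. Then a contradiction follows; i.e., every finitely generated torsion-free module over a Noetherian local domain with some Betti number equal to 1 has finite projective dimension. -/

import Mathlib

open CategoryTheory IsLocalRing

noncomputable section

/-- Auxiliary lemma: over a local domain, if `N` is generated by a single element `e ≠ 0`,
`N` is torsion-free, `d : N' →ₗ N` has range inside `m • ⊤`, and `ψ : N →ₗ T` (with `T`
torsion-free) has kernel equal to the range of `d`, then `d = 0`. -/
theorem stmt6_aux {R : Type} [CommRing R] [IsDomain R] [IsLocalRing R]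
    {N N' T : Type} [AddCommGroup N] [Module R N] [AddCommGroup N'] [Module R N']
    [AddCommGroup T] [Module R T] [NoZeroSMulDivisors R N] [NoZeroSMulDivisors R T]
    (e : N) (he0 : e ≠ 0) (hspan : (⊤ : Submodule R N) = Submodule.span R {e})
    (d : N' →ₗ[R] N) (hd : LinearMap.range d ≤ (maximalIdeal R) • (⊤ : Submodule R N))
    (ψ : N →ₗ[R] T) (hker : LinearMap.ker ψ = LinearMap.range d) :
    d = 0 := by
  -- a generator cannot be `s • e` with `s` in the maximal ideal
  have hnot : ∀ s ∈ maximalIdeal R, s • e ≠ e := by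
    intro s hs hse
    have h1 : (1 - s) • e = 0 := by
      rw [sub_smul, one_smul, hse, sub_self]
    have h1s : (1 : R) - s ≠ 0 := by
      intro h0
      have : s = 1 := by linear_combination -h0
      rw [this] at hs
      exact (IsLocalRing.maximalIdeal.isMaximal R).ne_top
        (Ideal.eq_top_of_isUnit_mem _ hs isUnit_one)
    rcases smul_eq_zero.mp h1 with h | h
    · exact h1s h
    · exact he0 h
  ext y
  by_contra hy
  have hmem : d y ∈ (maximalIdeal R) • (⊤ : Submodule R N) := hd ⟨y, rfl⟩
  rw [hspan, Submodule.mem_smul_span_singleton] at hmem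
  obtain ⟨r, hr, hre⟩ := hmem
  have hr0 : r ≠ 0 := by
    rintro rfl
    rw [zero_smul] at hre
    exact hy hre.symm
  have hψd : ψ (d y) = 0 := by
    have : d y ∈ LinearMap.ker ψ := hker ▸ LinearMap.mem_range_self d y
    exact this
  have hre' : r • ψ e = 0 := by
    rw [← map_smul, hre, hψd]
  have hψe : ψ e = 0 := by
    rcases smul_eq_zero.mp hre' with h | h
    · exact absurd h hr0
    · exact h
  have he_mem : e ∈ LinearMap.range d := by rw [← hker]; exact hψe
  have := hd he_mem
  rw [hspan, Submodule.mem_smul_span_singleton] at this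
  obtain ⟨s, hs, hse⟩ := this
  exact hnot s hs hse

/-- Over a Noetherian local domain, a finitely generated torsion-free module with some
Betti number equal to `1` has finite projective dimension: some term of its minimal
free resolution vanishes. -/
theorem stmt6 (R : Type) [CommRing R] [IsDomain R] [IsNoetherianRing R] [IsLocalRing R]
    (M : Type) [AddCommGroup M] [Module R M] [Module.Finite R M]
    (htf : NoZeroSMulDivisors R M)
    (F : ChainComplex (ModuleCat R) ℕ)
    (hfree : ∀ i, Module.Free R (F.X i)) (hfg : ∀ i, Module.Finite R (F.X i))
    (hmin : ∀ i, LinearMap.range (F.d (i + 1) i).hom ≤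
      (maximalIdeal R) • (⊤ : Submodule R (F.X i)))
    (hres0 : Nonempty ((F.homology 0) ≅ ModuleCat.of R M))
    (hres : ∀ i, i ≠ 0 → Subsingleton (F.homology i))
    (n : ℕ) (hn : Module.finrank R (F.X n) = 1) :
    ∃ m, Subsingleton (F.X m) := by
  classical
  haveI := fun i => hfree i
  haveI := fun i => hfg i
  haveI := htf
  haveI : ∀ i, NoZeroSMulDivisors R (F.X i) := fun i =>
    ⟨fun h => (Module.Free.chooseBasis R (F.X i)).smul_eq_zero.mp h⟩
  -- a generator `e` of `F.X n`
  obtain ⟨e, he0, hgen⟩ : ∃ e : F.X n, e ≠ 0 ∧ ∀ w : F.X n, ∃ c : R, c • e = w := by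
    let b := Module.Free.chooseBasis R (F.X n)
    have hcard : Fintype.card (Module.Free.ChooseBasisIndex R (F.X n)) = 1 := by
      rw [← Module.finrank_eq_card_chooseBasisIndex, hn]
    obtain ⟨i₀, hi₀⟩ := Fintype.card_eq_one_iff.mp hcard
    haveI : Unique (Module.Free.ChooseBasisIndex R (F.X n)) := ⟨⟨i₀⟩, fun j => hi₀ j⟩
    refine ⟨b i₀, b.ne_zero i₀, fun w => ⟨b.repr w i₀, ?_⟩⟩
    have := b.sum_repr w
    rwa [Fintype.sum_unique, hi₀ default] at this
  have hspan : (⊤ : Submodule R (F.X n)) = Submodule.span R {e} := by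
    apply le_antisymm
    · intro w _
      obtain ⟨c, hc⟩ := hgen w
      exact Submodule.mem_span_singleton.mpr ⟨c, hc⟩
    · exact le_top
  -- exactness of the resolution in positive degrees
  have hex : ∀ j : ℕ,
      LinearMap.range (F.d (j + 2) (j + 1)).hom = LinearMap.ker (F.d (j + 1) j).hom := by
    intro j
    have h1 : (F.sc' (j + 2) (j + 1) j).Exact := by
      rw [← F.exactAt_iff' (j + 2) (j + 1) j
        ((ComplexShape.down ℕ).prev_eq' (by simp)) (ChainComplex.next_nat_succ j)]
      rw [F.exactAt_iff_isZero_homology]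
      haveI := hres (j + 1) (Nat.succ_ne_zero j)
      exact ModuleCat.isZero_of_subsingleton _
    exact (ShortComplex.moduleCat_exact_iff_range_eq_ker _).mp h1
  -- the differential `F.d (n+1) n` vanishes
  have hd0 : (F.d (n + 1) n).hom = 0 := by
    cases n with
    | zero =>
      -- use the concrete description of `homology 0` and torsion-freeness of `M`
      have hprev0 : (ComplexShape.down ℕ).prev 0 = 1 :=
        (ComplexShape.down ℕ).prev_eq' (by simp)
      set S := F.sc' 1 0 0 with hSdef
      have hiso : F.homology 0 ≅ S.homology :=
        F.homologyIsoSc' 1 0 0 hprev0 ChainComplex.next_nat_zero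
      have total : S.moduleCatLeftHomologyData.H ≅ ModuleCat.of R M :=
        S.moduleCatHomologyIso.symm ≪≫ hiso.symm ≪≫ hres0.some
      haveI : NoZeroSMulDivisors R (ModuleCat.of R M) := htf
      let φ := total.toLinearEquiv
      haveI : NoZeroSMulDivisors R S.moduleCatLeftHomologyData.H :=
        Function.Injective.noZeroSMulDivisors φ φ.injective (map_zero φ) (map_smul φ)
      have hg0 : ∀ x : F.X 0, S.g.hom x = 0 := by
        intro x
        have : F.d 0 0 = 0 := F.shape 0 0 (by simp)
        show (F.d 0 0).hom x = 0
        rw [this]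
        rfl
      let toCyc : F.X 0 →ₗ[R] LinearMap.ker S.g.hom :=
        LinearMap.codRestrict (LinearMap.ker S.g.hom) LinearMap.id (fun x => hg0 x)
      let ψ : F.X 0 →ₗ[R] S.moduleCatLeftHomologyData.H :=
        (LinearMap.range S.moduleCatToCycles).mkQ ∘ₗ toCyc
      have hker : LinearMap.ker ψ = LinearMap.range (F.d 1 0).hom := by
        ext x
        constructor
        · intro hx
          have : (LinearMap.range S.moduleCatToCycles).mkQ (toCyc x) = 0 := hx
          rw [Submodule.mkQ_apply, Submodule.Quotient.mk_eq_zero] at this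
          obtain ⟨z, hz⟩ := this
          refine ⟨z, ?_⟩
          have := congrArg Subtype.val hz
          exact this
        · rintro ⟨z, rfl⟩
          have : toCyc ((F.d 1 0).hom z) = S.moduleCatToCycles z := by
            apply Subtype.ext
            rfl
          show (LinearMap.range S.moduleCatToCycles).mkQ (toCyc ((F.d 1 0).hom z)) = 0
          rw [this, Submodule.mkQ_apply, Submodule.Quotient.mk_eq_zero]
          exact LinearMap.mem_range_self _ z
      exact stmt6_aux e he0 hspan (F.d 1 0).hom (hmin 0) ψ hker
    | succ m =>
      exact stmt6_aux e he0 hspan (F.d (m + 2) (m + 1)).hom (hmin (m + 1))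
        (F.d (m + 1) m).hom (hex m).symm
  -- Nakayama: `F.X (n+1)` is trivial
  refine ⟨n + 1, ?_⟩
  have htop : LinearMap.range (F.d (n + 2) (n + 1)).hom = ⊤ := by
    rw [hex n, hd0]
    exact LinearMap.ker_zero
  have hbot : (⊤ : Submodule R (F.X (n + 1))) = ⊥ := by
    apply Submodule.eq_bot_of_le_smul_of_le_jacobson_bot (maximalIdeal R)
    · exact Module.Finite.fg_top
    · calc (⊤ : Submodule R (F.X (n + 1)))
          = LinearMap.range (F.d (n + 2) (n + 1)).hom := htop.symm
        _ ≤ (maximalIdeal R) • (⊤ : Submodule R (F.X (n + 1))) := hmin (n + 1)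
    · rw [IsLocalRing.jacobson_eq_maximalIdeal ⊥ bot_ne_top]
  refine ⟨fun a b => ?_⟩
  have ha : a ∈ (⊥ : Submodule R (F.X (n + 1))) := hbot ▸ Submodule.mem_top
  have hb : b ∈ (⊥ : Submodule R (F.X (n + 1))) := hbot ▸ Submodule.mem_top
  rw [Submodule.mem_bot] at ha hb
  rw [ha, hb]

end
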